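/- Let H be an inner product space, x_1,…,x_n ∈ H, and r > 0 such that ‖x_i − x_j‖ ≤ r for all 1 ≤ i < j ≤ n. Then (∑_{i=1}^n ‖x_i‖)² ≤ ‖∑_{i=1}^n x_i‖² + (n(n−1)/2) r². -/

import Mathlib

open RCLike Finset

theorem stmt_8 {𝕜 H : Type*} [RCLike 𝕜] [NormedAddCommGroup H] [InnerProductSpace 𝕜 H]
    (n : ℕ) (x : ℕ → H) (r : ℝ) (hr : 0 < r)
    (h : ∀ i ∈ Finset.Icc 1 n, ∀ j ∈ Finset.Icc 1 n, i < j → ‖x i - x j‖ ≤ r) :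
    (∑ i ∈ Finset.Icc 1 n, ‖x i‖) ^ 2 ≤ ‖∑ i ∈ Finset.Icc 1 n, x i‖ ^ 2 +
      ((n : ℝ) * (n - 1) / 2) * r ^ 2 := by
  set s := Finset.Icc 1 n with hs
  have hcard : s.card = n := by simp [hs]
  have hb : ∀ i ∈ s, ∀ j ∈ s, i ≠ j → ‖x i - x j‖ ≤ r := by
    intro i hi j hj hij
    rcases lt_or_gt_of_ne hij with h' | h'
    · exact h i hi j hj h'
    · rw [norm_sub_rev]; exact h j hj i hi h'
  have key : ∀ i ∈ s, ∀ j ∈ s,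
      ‖x i‖ * ‖x j‖ - re (inner 𝕜 (x i) (x j)) ≤ if i = j then 0 else r ^ 2 / 2 := by
    intro i hi j hj
    by_cases hij : i = j
    · subst hij
      simp [inner_self_eq_norm_mul_norm (𝕜 := 𝕜), sq]
    · simp only [if_neg hij]
      have h1 : ‖x i - x j‖ ^ 2 ≤ r ^ 2 := by
        have := hb i hi j hj hij
        nlinarith [norm_nonneg (x i - x j)]
      have h2 : ‖x i - x j‖ ^ 2 =
          ‖x i‖ ^ 2 - 2 * re (inner 𝕜 (x i) (x j)) + ‖x j‖ ^ 2 :=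
        norm_sub_sq (𝕜 := 𝕜) (x i) (x j)
      nlinarith [sq_nonneg (‖x i‖ - ‖x j‖)]
  have e1 : (∑ i ∈ s, ‖x i‖) ^ 2 = ∑ i ∈ s, ∑ j ∈ s, ‖x i‖ * ‖x j‖ := by
    rw [sq, Finset.sum_mul_sum]
  have e2 : ‖∑ i ∈ s, x i‖ ^ 2 = ∑ i ∈ s, ∑ j ∈ s, re (inner 𝕜 (x i) (x j)) := by
    rw [← inner_self_eq_norm_sq (𝕜 := 𝕜), sum_inner]
    rw [map_sum]
    refine Finset.sum_congr rfl fun i _ => ?_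
    rw [inner_sum, map_sum]
  have hsum : ∑ i ∈ s, ∑ j ∈ s, (‖x i‖ * ‖x j‖ - re (inner 𝕜 (x i) (x j)))
      ≤ ∑ i ∈ s, ∑ j ∈ s, (if i = j then (0:ℝ) else r ^ 2 / 2) :=
    Finset.sum_le_sum fun i hi => Finset.sum_le_sum fun j hj => key i hi j hj
  have hcount : ∑ i ∈ s, ∑ j ∈ s, (if i = j then (0:ℝ) else r ^ 2 / 2)
      = ((n : ℝ) * (n - 1) / 2) * r ^ 2 := by
    have hrow : ∀ i ∈ s, ∑ j ∈ s, (if i = j then (0:ℝ) else r ^ 2 / 2)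
        = (n : ℝ) * (r ^ 2 / 2) - r ^ 2 / 2 := by
      intro i hi
      have : ∑ j ∈ s, (if i = j then (0:ℝ) else r ^ 2 / 2)
          = ∑ j ∈ s, ((r ^ 2 / 2) - if i = j then r ^ 2 / 2 else 0) := by
        refine Finset.sum_congr rfl fun j _ => ?_
        by_cases hij : i = j <;> simp [hij]
      rw [this, Finset.sum_sub_distrib, Finset.sum_const, hcard,
        Finset.sum_ite_eq s i (fun _ => r ^ 2 / 2), if_pos hi]
      ring
    rw [Finset.sum_congr rfl hrow, Finset.sum_const, hcard]
    ring
  simp only [Finset.sum_sub_distrib] at hsum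
  rw [hcount] at hsum
  rw [e1, e2]
  linarith
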